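/- Let T be the unit regular tetrahedron in ℝ³. For every x > 1/2, the inverted scaled tetrahedron −x•T cannot hide behind T; in particular, the orthogonal projection of T onto the plane perpendicular to (0,0,1) (an equilateral triangle of side 1) contains no translate of the corresponding projection of −x•T. Hence 1/2 is the largest scale factor s such that −s•T can hide behind T. -/

import Mathlib

open scoped Pointwise
open MeasureTheory

/-- Orthogonal projection of a point onto the hyperplane `u^⊥`. -/
noncomputable def proj {n : ℕ} (u x : EuclideanSpace ℝ (Fin n)) : EuclideanSpace ℝ (Fin n) :=
  (Submodule.orthogonalProjection (ℝ ∙ u)ᗮ x : EuclideanSpace ℝ (Fin n))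

/-- `A` can hide behind `B`: for every unit direction `u` there is a translation vector in
`u^⊥` moving the shadow of `A` inside the shadow of `B`. -/
def HidesBehind {n : ℕ} (A B : Set (EuclideanSpace ℝ (Fin n))) : Prop :=
  ∀ u : EuclideanSpace ℝ (Fin n), ‖u‖ = 1 →
    ∃ v ∈ (ℝ ∙ u)ᗮ, v +ᵥ (proj u '' A) ⊆ proj u '' B

/-- The unit regular tetrahedron in `ℝ³`. -/
noncomputable def T : Set (EuclideanSpace ℝ (Fin 3)) :=
  convexHull ℝ {!₂[0, 0, 0], !₂[1, 0, 0], !₂[1/2, Real.sqrt 3 / 2, 0],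
    !₂[1/2, Real.sqrt 3 / 6, Real.sqrt (2/3)]}

/-- The vertical direction `(0, 0, 1)`, perpendicular to the base face of `T`
(hence parallel to that face's plane of projection). -/
noncomputable def e₃ : EuclideanSpace ℝ (Fin 3) := !₂[0, 0, 1]

/-! ### Auxiliary lemmas -/

lemma proj_smul {n : ℕ} (u : EuclideanSpace ℝ (Fin n)) (c : ℝ) (x : EuclideanSpace ℝ (Fin n)) :
    proj u (c • x) = c • proj u x := by
  simp [proj, _root_.map_smul]

lemma proj_neg {n : ℕ} (u x : EuclideanSpace ℝ (Fin n)) : proj u (-x) = - proj u x := by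
  simp [proj, map_neg]

lemma proj_linear {n : ℕ} (u : EuclideanSpace ℝ (Fin n)) :
    IsLinearMap ℝ (proj u) := by
  constructor <;> intros <;> simp [proj, _root_.map_add, _root_.map_smul]

lemma norm_e₃ : ‖e₃‖ = 1 := by
  rw [EuclideanSpace.norm_eq]
  simp [e₃, Fin.sum_univ_three]

lemma proj_e₃_eq (y : EuclideanSpace ℝ (Fin 3)) : proj e₃ y = y - y 2 • e₃ := by
  unfold proj
  refine Submodule.eq_starProjection_of_mem_orthogonal ?_ ?_
  · rw [Submodule.mem_orthogonal_singleton_iff_inner_right, PiLp.inner_apply]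
    simp [Fin.sum_univ_three, e₃]
  · have h1 : y - (y - y 2 • e₃) = y 2 • e₃ := by abel
    rw [h1]
    exact Submodule.le_orthogonal_orthogonal _
      (Submodule.smul_mem _ _ (Submodule.mem_span_singleton_self _))

lemma proj_e₃_apply0 (y : EuclideanSpace ℝ (Fin 3)) : proj e₃ y 0 = y 0 := by
  rw [proj_e₃_eq]; simp [e₃]

lemma proj_e₃_apply1 (y : EuclideanSpace ℝ (Fin 3)) : proj e₃ y 1 = y 1 := by
  rw [proj_e₃_eq]; simp [e₃]

lemma coord0 (v y : EuclideanSpace ℝ (Fin 3)) : (v + proj e₃ y) 0 = v 0 + y 0 := by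
  have : (v + proj e₃ y) 0 = v 0 + proj e₃ y 0 := rfl
  rw [this, proj_e₃_apply0]

lemma coord1 (v y : EuclideanSpace ℝ (Fin 3)) : (v + proj e₃ y) 1 = v 1 + y 1 := by
  have : (v + proj e₃ y) 1 = v 1 + proj e₃ y 1 := rfl
  rw [this, proj_e₃_apply1]

lemma combo3_mem {E : Type*} [AddCommGroup E] [Module ℝ E] {s : Set E} {p₁ p₂ p₃ : E}
    (h₁ : p₁ ∈ s) (h₂ : p₂ ∈ s) (h₃ : p₃ ∈ s) {a b c : ℝ}
    (ha : 0 ≤ a) (hb : 0 ≤ b) (hc : 0 ≤ c) (habc : a + b + c = 1) :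
    a • p₁ + b • p₂ + c • p₃ ∈ convexHull ℝ s := by
  have h := Finset.centerMass_mem_convexHull (s := s) (t := (Finset.univ : Finset (Fin 3)))
      (w := ![a, b, c]) (z := ![p₁, p₂, p₃])
      (by intro i _; fin_cases i <;> simpa)
      (by rw [Fin.sum_univ_three]; simp; linarith)
      (by intro i _; fin_cases i <;> simpa)
  rw [Finset.centerMass, Fin.sum_univ_three, Fin.sum_univ_three] at h
  simpa [habc] using h

lemma key4 {E : Type*} [AddCommGroup E] [Module ℝ E] [NoZeroSMulDivisors ℝ E]
    (q : Fin 4 → E) (c : Fin 4 → ℝ)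
    (h0 : ∑ i, c i = 0) (hrel : ∑ i, c i • q i = 0)
    (hmax : ∀ i, |c i| ≤ |c 3|) (hc3 : c 3 ≠ 0) :
    ∃ v : E, (∀ i, v - (1/2 : ℝ) • q i ∈ convexHull ℝ (Set.range q)) ∧
      ∀ S : Submodule ℝ E, (∀ i, q i ∈ S) → v ∈ S := by
  have habs : ∀ d : ℝ, |d| ≤ |c 3| → -d / c 3 ≤ 1 := by
    intro d hd
    calc -d / c 3 ≤ |(-d) / c 3| := le_abs_self _
      _ = |d| / |c 3| := by rw [abs_div, abs_neg]
      _ ≤ 1 := div_le_one_of_le₀ hd (abs_nonneg _)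
  set α := -(c 0) / c 3 with hαdef
  set β := -(c 1) / c 3 with hβdef
  set γ := -(c 2) / c 3 with hγdef
  have hα : α ≤ 1 := habs _ (hmax 0)
  have hβ : β ≤ 1 := habs _ (hmax 1)
  have hγ : γ ≤ 1 := habs _ (hmax 2)
  have h0' : c 0 + c 1 + c 2 + c 3 = 0 := by rw [Fin.sum_univ_four] at h0; exact h0
  have hsum : α + β + γ = 1 := by
    rw [hαdef, hβdef, hγdef, ← add_div, ← add_div,
      show -c 0 + -c 1 + -c 2 = c 3 by linarith]
    exact div_self hc3
  have hq3 : q 3 = α • q 0 + β • q 1 + γ • q 2 := by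
    refine smul_right_injective E hc3 ?_
    show c 3 • q 3 = c 3 • (α • q 0 + β • q 1 + γ • q 2)
    have h1 : c 3 • q 3 = (-(c 0)) • q 0 + (-(c 1)) • q 1 + (-(c 2)) • q 2 := by
      rw [Fin.sum_univ_four] at hrel
      linear_combination (norm := module) hrel
    rw [h1, hαdef, hβdef, hγdef]
    match_scalars <;> (field_simp; try ring)
  have hr : ∀ i : Fin 4, q i ∈ Set.range q := fun i => ⟨i, rfl⟩
  refine ⟨(1/2 : ℝ) • (q 0 + q 1 + q 2), ?_, ?_⟩
  · have m0 : (1/2:ℝ) • (q 0 + q 1 + q 2) - (1/2:ℝ) • q 0 ∈ convexHull ℝ (Set.range q) := by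
      rw [show (1/2:ℝ) • (q 0 + q 1 + q 2) - (1/2:ℝ) • q 0
          = (0:ℝ) • q 0 + (1/2:ℝ) • q 1 + (1/2:ℝ) • q 2 by module]
      exact combo3_mem (hr 0) (hr 1) (hr 2) le_rfl (by norm_num) (by norm_num) (by norm_num)
    have m1 : (1/2:ℝ) • (q 0 + q 1 + q 2) - (1/2:ℝ) • q 1 ∈ convexHull ℝ (Set.range q) := by
      rw [show (1/2:ℝ) • (q 0 + q 1 + q 2) - (1/2:ℝ) • q 1
          = (1/2:ℝ) • q 0 + (0:ℝ) • q 1 + (1/2:ℝ) • q 2 by module]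
      exact combo3_mem (hr 0) (hr 1) (hr 2) (by norm_num) le_rfl (by norm_num) (by norm_num)
    have m2 : (1/2:ℝ) • (q 0 + q 1 + q 2) - (1/2:ℝ) • q 2 ∈ convexHull ℝ (Set.range q) := by
      rw [show (1/2:ℝ) • (q 0 + q 1 + q 2) - (1/2:ℝ) • q 2
          = (1/2:ℝ) • q 0 + (1/2:ℝ) • q 1 + (0:ℝ) • q 2 by module]
      exact combo3_mem (hr 0) (hr 1) (hr 2) (by norm_num) (by norm_num) le_rfl (by norm_num)
    have m3 : (1/2:ℝ) • (q 0 + q 1 + q 2) - (1/2:ℝ) • q 3 ∈ convexHull ℝ (Set.range q) := by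
      rw [show (1/2:ℝ) • (q 0 + q 1 + q 2) - (1/2:ℝ) • q 3
          = ((1-α)/2) • q 0 + ((1-β)/2) • q 1 + ((1-γ)/2) • q 2 by rw [hq3]; module]
      exact combo3_mem (hr 0) (hr 1) (hr 2) (by linarith) (by linarith) (by linarith)
        (by linarith)
    intro i
    fin_cases i
    exacts [m0, m1, m2, m3]
  · intro S hS
    exact S.smul_mem _ (S.add_mem (S.add_mem (hS 0) (hS 1)) (hS 2))

lemma key {E : Type*} [AddCommGroup E] [Module ℝ E] [NoZeroSMulDivisors ℝ E]
    (q : Fin 4 → E) (c : Fin 4 → ℝ)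
    (h0 : ∑ i, c i = 0) (hrel : ∑ i, c i • q i = 0) (hne : ∃ i, c i ≠ 0) :
    ∃ v : E, (∀ i, v - (1/2 : ℝ) • q i ∈ convexHull ℝ (Set.range q)) ∧
      ∀ S : Submodule ℝ E, (∀ i, q i ∈ S) → v ∈ S := by
  obtain ⟨m, -, hm⟩ := Finset.exists_max_image Finset.univ (fun i => |c i|) ⟨0, Finset.mem_univ 0⟩
  have hm' : ∀ i, |c i| ≤ |c m| := fun i => hm i (Finset.mem_univ i)
  have hcm : c m ≠ 0 := by
    obtain ⟨i, hi⟩ := hne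
    intro h
    have h2 := hm' i
    rw [h, abs_zero] at h2
    exact hi (abs_nonpos_iff.mp h2)
  set σ : Equiv.Perm (Fin 4) := Equiv.swap m 3 with hσ
  have hσ3 : σ 3 = m := Equiv.swap_apply_right m 3
  have h0' : ∑ i, c (σ i) = 0 := by rw [Equiv.sum_comp σ c]; exact h0
  have hrel' : ∑ i, c (σ i) • q (σ i) = 0 := by
    rw [Equiv.sum_comp σ (fun i => c i • q i)]; exact hrel
  obtain ⟨v, hv1, hv2⟩ := key4 (fun i => q (σ i)) (fun i => c (σ i)) h0' hrel'
      (by intro i; show |c (σ i)| ≤ |c (σ 3)|; rw [hσ3]; exact hm' _)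
      (by show c (σ 3) ≠ 0; rw [hσ3]; exact hcm)
  have hrange : Set.range (fun j => q (σ j)) = Set.range q := σ.surjective.range_comp q
  refine ⟨v, ?_, fun S hS => hv2 S (fun i => hS (σ i))⟩
  intro i
  have h2 := hv1 (σ.symm i)
  rw [hrange] at h2
  simpa using h2

lemma memb : HidesBehind ((-(1/2:ℝ)) • T) T := by
  intro u hu
  have hu0 : u ≠ 0 := fun h => by simp [h] at hu
  have hfr : Module.finrank ℝ (ℝ ∙ u)ᗮ = 2 := by
    have h1 : Module.finrank ℝ (ℝ ∙ u) = 1 := finrank_span_singleton hu0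
    have h2 := Submodule.finrank_add_finrank_orthogonal (K := (ℝ ∙ u))
    rw [h1, finrank_euclideanSpace_fin] at h2
    omega
  set A : EuclideanSpace ℝ (Fin 3) := !₂[0,0,0] with hA
  set B : EuclideanSpace ℝ (Fin 3) := !₂[1,0,0] with hB
  set C : EuclideanSpace ℝ (Fin 3) := !₂[1/2, Real.sqrt 3 / 2, 0] with hC
  set D : EuclideanSpace ℝ (Fin 3) := !₂[1/2, Real.sqrt 3 / 6, Real.sqrt (2/3)] with hD
  set q : Fin 4 → EuclideanSpace ℝ (Fin 3) := ![proj u A, proj u B, proj u C, proj u D] with hq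
  have hqK : ∀ i, q i ∈ (ℝ ∙ u)ᗮ := by
    intro i
    fin_cases i <;> exact SetLike.coe_mem _
  let r : Fin 3 → (ℝ ∙ u)ᗮ := ![⟨q 1 - q 0, Submodule.sub_mem _ (hqK 1) (hqK 0)⟩,
    ⟨q 2 - q 0, Submodule.sub_mem _ (hqK 2) (hqK 0)⟩,
    ⟨q 3 - q 0, Submodule.sub_mem _ (hqK 3) (hqK 0)⟩]
  have hnli : ¬ LinearIndependent ℝ r := by
    intro h
    have h3 := h.fintype_card_le_finrank
    rw [hfr, Fintype.card_fin] at h3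
    omega
  obtain ⟨g, hg, j, hj⟩ := Fintype.not_linearIndependent_iff.mp hnli
  have hgE : g 0 • (q 1 - q 0) + g 1 • (q 2 - q 0) + g 2 • (q 3 - q 0) = 0 := by
    have h2 := congrArg ((ℝ ∙ u)ᗮ.subtype) hg
    rw [map_sum, map_zero, Fin.sum_univ_three] at h2
    simpa [r] using h2
  set cc : Fin 4 → ℝ := ![-(g 0 + g 1 + g 2), g 0, g 1, g 2] with hcc
  have h0 : ∑ i, cc i = 0 := by
    simp [cc, Fin.sum_univ_four]
    ring
  have hrel : ∑ i, cc i • q i = 0 := by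
    rw [Fin.sum_univ_four]
    simp only [cc, Matrix.cons_val_zero, Matrix.cons_val_one, Matrix.head_cons,
      Matrix.cons_val_two, Matrix.tail_cons, Matrix.cons_val_three]
    linear_combination (norm := module) hgE
  have hne : ∃ i, cc i ≠ 0 := by
    fin_cases j
    · exact ⟨1, by simpa [cc] using hj⟩
    · exact ⟨2, by simpa [cc] using hj⟩
    · exact ⟨3, by simpa [cc] using hj⟩
  obtain ⟨v, hv1, hv2⟩ := key q cc h0 hrel hne
  have hvK : v ∈ (ℝ ∙ u)ᗮ := hv2 _ hqK
  refine ⟨v, hvK, ?_⟩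
  have hT : T = convexHull ℝ {A, B, C, D} := rfl
  have him : proj u '' T = convexHull ℝ (Set.range q) := by
    rw [hT, (proj_linear u).image_convexHull]
    congr 1
    rw [Set.image_insert_eq, Set.image_insert_eq, Set.image_insert_eq, Set.image_singleton]
    ext x
    simp only [hq, Matrix.range_cons, Matrix.range_empty, Set.union_empty, Set.union_singleton,
      Set.mem_insert_iff, Set.mem_singleton_iff, Set.mem_union]
    tauto
  have him2 : proj u '' ((-(1/2:ℝ)) • T) = convexHull ℝ
      {(-(1/2:ℝ)) • q 0, (-(1/2:ℝ)) • q 1, (-(1/2:ℝ)) • q 2, (-(1/2:ℝ)) • q 3} := by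
    rw [hT, ← convexHull_smul, (proj_linear u).image_convexHull]
    congr 1
    rw [Set.smul_set_insert, Set.smul_set_insert, Set.smul_set_insert, Set.smul_set_singleton]
    rw [Set.image_insert_eq, Set.image_insert_eq, Set.image_insert_eq, Set.image_singleton]
    simp only [proj_smul]; rfl
  rw [him, him2]
  rintro p ⟨w, hw, rfl⟩
  have hconv : convexHull ℝ
      {(-(1/2:ℝ)) • q 0, (-(1/2:ℝ)) • q 1, (-(1/2:ℝ)) • q 2, (-(1/2:ℝ)) • q 3} ⊆
      {z | v + z ∈ convexHull ℝ (Set.range q)} := by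
    apply convexHull_min
    · rintro z hz
      simp only [Set.mem_insert_iff, Set.mem_singleton_iff] at hz
      rcases hz with rfl|rfl|rfl|rfl
      · simpa [sub_eq_add_neg, show v + (-(1/2:ℝ)) • q 0 = v - (1/2:ℝ) • q 0 by module] using hv1 0
      · simpa [sub_eq_add_neg, show v + (-(1/2:ℝ)) • q 1 = v - (1/2:ℝ) • q 1 by module] using hv1 1
      · simpa [sub_eq_add_neg, show v + (-(1/2:ℝ)) • q 2 = v - (1/2:ℝ) • q 2 by module] using hv1 2
      · simpa [sub_eq_add_neg, show v + (-(1/2:ℝ)) • q 3 = v - (1/2:ℝ) • q 3 by module] using hv1 3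
    · exact (convex_convexHull ℝ _).translate_preimage_right v
  exact hconv hw

lemma T_bounds : ∀ y ∈ T, 0 ≤ y 1 ∧ y 1 ≤ Real.sqrt 3 * y 0 ∧
    Real.sqrt 3 * y 0 + y 1 ≤ Real.sqrt 3 := by
  have hs3 : (0:ℝ) ≤ Real.sqrt 3 := Real.sqrt_nonneg 3
  have hlin1 : IsLinearMap ℝ (fun y : EuclideanSpace ℝ (Fin 3) => y 1) :=
    ⟨fun _ _ => rfl, fun _ _ => rfl⟩
  have hlin2 : IsLinearMap ℝ (fun y : EuclideanSpace ℝ (Fin 3) =>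
      Real.sqrt 3 * y 0 - y 1) := by
    constructor
    · intro a b
      show Real.sqrt 3 * (a 0 + b 0) - (a 1 + b 1) = _
      ring
    · intro c a
      show Real.sqrt 3 * (c * a 0) - c * a 1 = c * (Real.sqrt 3 * a 0 - a 1)
      ring
  have hlin3 : IsLinearMap ℝ (fun y : EuclideanSpace ℝ (Fin 3) =>
      Real.sqrt 3 * y 0 + y 1) := by
    constructor
    · intro a b
      show Real.sqrt 3 * (a 0 + b 0) + (a 1 + b 1) = _
      ring
    · intro c a
      show Real.sqrt 3 * (c * a 0) + c * a 1 = c * (Real.sqrt 3 * a 0 + a 1)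
      ring
  intro y hy
  refine ⟨?_, ?_, ?_⟩
  · refine convexHull_min ?_ (convex_halfSpace_ge hlin1 0) hy
    rintro z hz
    simp only [Set.mem_insert_iff, Set.mem_singleton_iff] at hz
    rcases hz with rfl|rfl|rfl|rfl <;> simp <;> positivity
  · have h := convexHull_min ?_ (convex_halfSpace_ge hlin2 0) hy
    · simpa using sub_nonneg.mp h
    rintro z hz
    simp only [Set.mem_insert_iff, Set.mem_singleton_iff] at hz
    rcases hz with rfl|rfl|rfl|rfl <;> simp <;> nlinarith [hs3]
  · refine convexHull_min ?_ (convex_halfSpace_le hlin3 (Real.sqrt 3)) hy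
    rintro z hz
    simp only [Set.mem_insert_iff, Set.mem_singleton_iff] at hz
    rcases hz with rfl|rfl|rfl|rfl <;> simp <;> nlinarith [hs3]

lemma part2 (x : ℝ) (hx : 1/2 < x) :
    ¬ ∃ v ∈ (ℝ ∙ e₃)ᗮ, v +ᵥ (proj e₃ '' ((-x) • T)) ⊆ proj e₃ '' T := by
  rintro ⟨v, -, hsub⟩
  have hmem : ∀ y ∈ T, v + proj e₃ ((-x) • y) ∈ proj e₃ '' T := by
    intro y hy
    exact hsub (Set.vadd_mem_vadd_set (Set.mem_image_of_mem _ (Set.smul_mem_smul_set hy)))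
  have img_bounds : ∀ p ∈ proj e₃ '' T, 0 ≤ p 1 ∧ p 1 ≤ Real.sqrt 3 * p 0 ∧
      Real.sqrt 3 * p 0 + p 1 ≤ Real.sqrt 3 := by
    rintro p ⟨z, hz, rfl⟩
    obtain ⟨h1, h2, h3⟩ := T_bounds z hz
    rw [proj_e₃_apply0, proj_e₃_apply1]
    exact ⟨h1, h2, h3⟩
  have hvertA : (!₂[0,0,0] : EuclideanSpace ℝ (Fin 3)) ∈ T :=
    subset_convexHull ℝ _ (by left; rfl)
  have hvertB : (!₂[1,0,0] : EuclideanSpace ℝ (Fin 3)) ∈ T :=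
    subset_convexHull ℝ _ (by right; left; rfl)
  have hvertC : (!₂[1/2, Real.sqrt 3 / 2, 0] : EuclideanSpace ℝ (Fin 3)) ∈ T :=
    subset_convexHull ℝ _ (by right; right; left; rfl)
  have hs : (0:ℝ) < Real.sqrt 3 := Real.sqrt_pos.2 (by norm_num)
  -- vertex A
  have eA := (img_bounds _ (hmem _ hvertA)).2.2
  rw [coord0, coord1] at eA
  have hcA0 : ((-x) • (!₂[0,0,0] : EuclideanSpace ℝ (Fin 3))) 0 = 0 := by
    show (-x) * _ = 0; simp
  have hcA1 : ((-x) • (!₂[0,0,0] : EuclideanSpace ℝ (Fin 3))) 1 = 0 := by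
    show (-x) * _ = 0; simp
  rw [hcA0, hcA1] at eA
  -- vertex B
  have eB := (img_bounds _ (hmem _ hvertB)).2.1
  rw [coord0, coord1] at eB
  have hcB0 : ((-x) • (!₂[1,0,0] : EuclideanSpace ℝ (Fin 3))) 0 = -x := by
    show (-x) * _ = -x; simp
  have hcB1 : ((-x) • (!₂[1,0,0] : EuclideanSpace ℝ (Fin 3))) 1 = 0 := by
    show (-x) * _ = 0; simp
  rw [hcB0, hcB1] at eB
  -- vertex C
  have eC := (img_bounds _ (hmem _ hvertC)).1
  rw [coord1] at eC
  have hcC1 : ((-x) • (!₂[1/2, Real.sqrt 3 / 2, 0] : EuclideanSpace ℝ (Fin 3))) 1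
      = -x * (Real.sqrt 3 / 2) := by
    show (-x) * _ = _; norm_num
  rw [hcC1] at eC
  -- combine
  have hprod : 0 < Real.sqrt 3 * (2*x - 1) := mul_pos hs (by linarith)
  nlinarith [eA, eB, eC, hprod]

theorem half_is_largest_inverted_scale :
    (∀ x : ℝ, 1/2 < x →
      ¬ HidesBehind ((-x) • T) T ∧
      ¬ ∃ v ∈ (ℝ ∙ e₃)ᗮ,
          v +ᵥ (proj e₃ '' ((-x) • T)) ⊆ proj e₃ '' T) ∧
    IsGreatest {s : ℝ | HidesBehind ((-s) • T) T} (1/2) := by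
  have part1 : ∀ x : ℝ, 1/2 < x → ¬ HidesBehind ((-x) • T) T := by
    intro x hx h
    exact part2 x hx (h e₃ norm_e₃)
  refine ⟨fun x hx => ⟨part1 x hx, part2 x hx⟩, memb, ?_⟩
  intro s hs
  by_contra h
  push_neg at h
  exact part1 s h hs
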